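/- arXiv:math/0311522 — 3 statements merged into one kernel-verified Lean document; each statement's English description precedes it below -/
import Mathlib

section
/- Let L ⊆ H with H = kL. Then W_H(R) = W_L(R) for any H-module algebra R. -/
open scoped TensorProduct

class HModAlg (k H R : Type*) [CommRing k] [Ring H] [Algebra k H]
    [Coalgebra k H] [NonUnitalRing R] [Module k R]
    [SMulCommClass k R R] [IsScalarTower k R R] where
  hsmul : H →ₗ[k] R →ₗ[k] R
  one_hsmul : ∀ r : R, hsmul 1 r = r
  mul_hsmul : ∀ (h h' : H) (r : R), hsmul (h * h') r = hsmul h (hsmul h' r)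
  hsmul_mul : ∀ (h : H) (a b : R),
    hsmul h (a * b) =
      LinearMap.mul' k R
        (TensorProduct.map (hsmul.flip a) (hsmul.flip b) (Coalgebra.comul h))

/-- product f 0 * f 1 * ⋯ * f n -/
def prodSeq {R : Type*} [Mul R] (f : ℕ → R) : ℕ → R
  | 0 => f 0
  | n + 1 => prodSeq f n * f (n + 1)

/-- `I` is a nilpotent subset: some power of it vanishes. -/
def IsNilpotentSet {R : Type*} [Mul R] [Zero R] (I : Set R) : Prop :=
  ∃ n : ℕ, ∀ f : ℕ → R, (∀ i, f i ∈ I) → prodSeq f n = 0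

/-- `I` is nilpotent modulo `J`. -/
def IsNilpotentSetMod {R : Type*} [Mul R] (I J : Set R) : Prop :=
  ∃ n : ℕ, ∀ f : ℕ → R, (∀ i, f i ∈ I) → prodSeq f n ∈ J

section Defs

variable (k H : Type*) {R : Type*} [CommRing k] [Ring H] [Algebra k H]
  [Coalgebra k H] [NonUnitalRing R] [Module k R]
  [SMulCommClass k R R] [IsScalarTower k R R] [HModAlg k H R]

/-- The action of `h : H` on `r : R`. -/
def hact (h : H) (r : R) : R := HModAlg.hsmul (k := k) h r

/-- `I` is an `H`-ideal of the `H`-module (sub)algebra `B ⊆ R`. -/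
structure IsHIdealIn (B I : Set R) : Prop where
  subset : I ⊆ B
  zero_mem : (0 : R) ∈ I
  add_mem : ∀ {x y : R}, x ∈ I → y ∈ I → x + y ∈ I
  neg_mem : ∀ {x : R}, x ∈ I → -x ∈ I
  mul_mem_left : ∀ {x : R}, x ∈ B → ∀ {y : R}, y ∈ I → x * y ∈ I
  mul_mem_right : ∀ {x : R}, x ∈ I → ∀ {y : R}, y ∈ B → x * y ∈ I
  hsmul_mem : ∀ (h : H) {x : R}, x ∈ I → hact k H h x ∈ I

/-- `I` is an `H`-ideal of `R`. -/
def IsHIdeal (I : Set R) : Prop := IsHIdealIn k H Set.univ I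

/-- `R` is `H`-semiprime. -/
def IsHSemiprime : Prop :=
  ∀ I : Set R, IsHIdeal k H I → IsNilpotentSet I → I = {0}

/-- The subalgebra `B` of `R` is `H`-semiprime. -/
def IsHSemiprimeIn (B : Set R) : Prop :=
  ∀ I : Set R, IsHIdealIn k H B I → IsNilpotentSet I → I = {0}

/-- `R` is `H`-prime. -/
def IsHPrime : Prop :=
  ∀ I J : Set R, IsHIdeal k H I → IsHIdeal k H J →
    (∀ a ∈ I, ∀ b ∈ J, a * b = 0) → I = {0} ∨ J = {0}

/-- The `H`-ideal of `R` generated by `E`. -/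
def genHIdeal (E : Set R) : Set R := ⋂₀ {I : Set R | IsHIdeal k H I ∧ E ⊆ I}

end Defs


/-- The set `W_L(R)` of `L`-`m`-nilpotent elements. -/
def WLset (k H : Type*) {R : Type*} [CommRing k] [Ring H] [Algebra k H]
    [Coalgebra k H] [NonUnitalRing R] [Module k R] [SMulCommClass k R R]
    [IsScalarTower k R R] [HModAlg k H R] (L : Set H) : Set R :=
  {a : R | ∀ (s b : ℕ → R) (h h' : ℕ → H), (∀ n, h n ∈ L) → (∀ n, h' n ∈ L) →
    s 0 = a →
    (∀ n, s (n + 1) = hact k H (h n) (s n) * b n * hact k H (h' n) (s n)) →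
    ∃ n, s n = 0}


section AuxStmt13

lemma auxChain {α : Type*} (Q : α → Prop) (T : α → α → Prop)
    (h : ∀ x, Q x → ∃ y, T x y ∧ Q y) (a : α) (ha : Q a) :
    ∃ f : ℕ → α, f 0 = a ∧ (∀ n, T (f n) (f (n + 1))) ∧ ∀ n, Q (f n) := by
  have step : ∀ x : {x : α // Q x}, ∃ y : {x : α // Q x}, T x.1 y.1 := fun x =>
    let ⟨y, hT, hQ⟩ := h x.1 x.2
    ⟨⟨y, hQ⟩, hT⟩
  choose g hg using step
  refine ⟨fun n => (g^[n] ⟨a, ha⟩).1, rfl, fun n => ?_, fun n => (g^[n] ⟨a, ha⟩).2⟩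
  show T (g^[n] ⟨a, ha⟩).1 (g^[n + 1] ⟨a, ha⟩).1
  rw [Function.iterate_succ_apply']
  exact hg _

/-- left multiplication by an optional element -/
def omul {R : Type*} [Mul R] : Option R → R → R
  | none, x => x
  | some a, x => a * x

/-- right multiplication by an optional element -/
def mulo {R : Type*} [Mul R] : R → Option R → R
  | x, none => x
  | x, some a => x * a

@[simp] lemma omul_none {R : Type*} [Mul R] (x : R) : omul none x = x := rfl
@[simp] lemma omul_some {R : Type*} [Mul R] (a x : R) : omul (some a) x = a * x := rfl
@[simp] lemma mulo_none {R : Type*} [Mul R] (x : R) : mulo x none = x := rfl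
@[simp] lemma mulo_some {R : Type*} [Mul R] (x a : R) : mulo x (some a) = x * a := rfl

lemma prod_eq {R : Type*} [NonUnitalRing R] (u v u' v' : Option R) (Xa Xb b : R) :
    (mulo (omul u Xa) v) * b * (mulo (omul u' Xb) v') =
      omul u (mulo (Xa * (mulo (omul v b) u') * Xb) v') := by
  cases u <;> cases v <;> cases u' <;> cases v' <;> simp [mul_assoc]

variable {k H R : Type*} [CommRing k] [Ring H] [Algebra k H] [Coalgebra k H]
  [NonUnitalRing R] [Module k R] [SMulCommClass k R R] [IsScalarTower k R R]
  [HModAlg k H R]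

lemma hact_zero (g : H) : hact k H g (0 : R) = 0 := by
  unfold hact; exact map_zero _

lemma hact_add (g : H) (x y : R) :
    hact k H g (x + y) = hact k H g x + hact k H g y := by
  unfold hact; exact map_add _ _ _

lemma hact_one (r : R) : hact k H (1 : H) r = r := HModAlg.one_hsmul r

lemma hact_hact (g h : H) (r : R) :
    hact k H g (hact k H h r) = hact k H (g * h) r := by
  unfold hact; exact (HModAlg.mul_hsmul g h r).symm

lemma hact_mul_ind (h : H) (x y : R) (Q : R → Prop) (hzero : Q 0)
    (hadd : ∀ a b : R, Q a → Q b → Q (a + b))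
    (hgen : ∀ g g' : H, Q (hact k H g x * hact k H g' y)) :
    Q (hact k H h (x * y)) := by
  have e := HModAlg.hsmul_mul (k := k) (H := H) (R := R) h x y
  unfold hact
  rw [e]
  generalize (Coalgebra.comul h : H ⊗[k] H) = z
  induction z using TensorProduct.induction_on with
  | zero => simpa using hzero
  | tmul a b =>
    rw [TensorProduct.map_tmul, LinearMap.mul'_apply]
    simp only [LinearMap.flip_apply]
    exact hgen a b
  | add z w hz hw =>
    rw [map_add, map_add]
    exact hadd _ _ hz hw

lemma star_lemma (L : Set H) (hL : Submodule.span k L = ⊤) (P : Set R) (c : R)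
    (h0 : (0 : R) ∈ P) (haddP : ∀ x y : R, x ∈ P → y ∈ P → x + y ∈ P)
    (hall : ∀ l ∈ L, ∀ l' ∈ L, ∀ b : R, hact k H l c * b * hact k H l' c ∈ P)
    (g g' : H) (b : R) : hact k H g c * b * hact k H g' c ∈ P := by
  set φ : H →ₗ[k] R := (HModAlg.hsmul (k := k) (H := H) (R := R)).flip c with hφ
  have hmem : ∀ h : H, hact k H h c ∈ Submodule.span k (φ '' L) := by
    intro h
    have h1 : h ∈ Submodule.span k L := by rw [hL]; trivial
    exact Submodule.apply_mem_span_image_of_mem_span φ h1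
  have main : ∀ u ∈ Submodule.span k (φ '' L), ∀ v ∈ Submodule.span k (φ '' L),
      ∀ b : R, u * b * v ∈ P := by
    intro u hu
    induction hu using Submodule.span_induction with
    | mem x hx =>
      obtain ⟨l, hlL, rfl⟩ := hx
      intro v hv
      induction hv using Submodule.span_induction with
      | mem y hy =>
        obtain ⟨l', hl'L, rfl⟩ := hy
        intro b
        exact hall l hlL l' hl'L b
      | zero => intro b; rw [mul_zero]; exact h0
      | add y z hy hz ihy ihz =>
        intro b; rw [mul_add]; exact haddP _ _ (ihy b) (ihz b)
      | smul a y hy ih =>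
        intro b
        have e : φ l * b * (a • y) = φ l * (a • b) * y := by
          simp only [mul_smul_comm, smul_mul_assoc]
        rw [e]; exact ih (a • b)
    | zero => intro v hv b; rw [zero_mul, zero_mul]; exact h0
    | add x y hx hy ihx ihy =>
      intro v hv b; rw [add_mul, add_mul]; exact haddP _ _ (ihx v hv b) (ihy v hv b)
    | smul a x hx ih =>
      intro v hv b
      have e : (a • x) * b * v = x * (a • b) * v := by
        simp only [mul_smul_comm, smul_mul_assoc]
      rw [e]; exact ih v hv (a • b)
  exact main _ (hmem g) _ (hmem g') b

lemma claim_core (P : Set R) (c : R)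
    (h0 : (0 : R) ∈ P)
    (haddP : ∀ x y : R, x ∈ P → y ∈ P → x + y ∈ P)
    (hmulL : ∀ x y : R, y ∈ P → x * y ∈ P)
    (hmulR : ∀ y x : R, y ∈ P → y * x ∈ P)
    (hactP : ∀ (g : H) (y : R), y ∈ P → hact k H g y ∈ P)
    (star : ∀ (g g' : H) (b : R), hact k H g c * b * hact k H g' c ∈ P) :
    ∃ J : Set R, P ⊆ J ∧ c ∈ J ∧ (0 : R) ∈ J ∧
      (∀ x y : R, x ∈ J → y ∈ J → x + y ∈ J) ∧
      (∀ x y : R, y ∈ J → x * y ∈ J) ∧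
      (∀ y x : R, y ∈ J → y * x ∈ J) ∧
      (∀ (g : H) (y : R), y ∈ J → hact k H g y ∈ J) ∧
      (∀ (g g' : H) (b : R) (x y : R), x ∈ J → y ∈ J →
        hact k H g x * b * hact k H g' y ∈ P) := by
  classical
  set T : Set R := {x | ∃ (h : H) (u v : Option R), x = mulo (omul u (hact k H h c)) v}
    with hT
  set Tc : AddSubmonoid R := AddSubmonoid.closure T with hTcdef
  have hTsub : T ⊆ (Tc : Set R) := AddSubmonoid.subset_closure
  -- Tc is closed under the H-action
  have hTact : ∀ (g : H) (t : R), t ∈ Tc → hact k H g t ∈ Tc := by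
    intro g t ht
    induction ht using AddSubmonoid.closure_induction with
    | mem τ hτ =>
      obtain ⟨h, u, v, rfl⟩ := hτ
      cases u with
      | none =>
        cases v with
        | none =>
          simp only [omul_none, mulo_none]
          rw [hact_hact]
          exact hTsub ⟨g * h, none, none, by simp⟩
        | some v₀ =>
          simp only [omul_none, mulo_some]
          refine hact_mul_ind g (hact k H h c) v₀ (· ∈ Tc) (zero_mem Tc)
            (fun a b ha hb => add_mem ha hb) ?_
          intro p q
          rw [hact_hact]
          exact hTsub ⟨p * h, none, some (hact k H q v₀), by simp⟩
      | some u₀ =>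
        cases v with
        | none =>
          simp only [omul_some, mulo_none]
          refine hact_mul_ind g u₀ (hact k H h c) (· ∈ Tc) (zero_mem Tc)
            (fun a b ha hb => add_mem ha hb) ?_
          intro p q
          rw [hact_hact]
          exact hTsub ⟨q * h, some (hact k H p u₀), none, by simp⟩
        | some v₀ =>
          simp only [omul_some, mulo_some]
          refine hact_mul_ind g (u₀ * hact k H h c) v₀ (· ∈ Tc) (zero_mem Tc)
            (fun a b ha hb => add_mem ha hb) ?_
          intro p q
          refine hact_mul_ind p u₀ (hact k H h c) (fun z => z * hact k H q v₀ ∈ Tc)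
            (by show (0 : R) * hact k H q v₀ ∈ Tc; rw [zero_mul]; exact zero_mem Tc)
            (fun a b ha hb => by
              show (a + b) * hact k H q v₀ ∈ Tc
              rw [add_mul]; exact add_mem ha hb) ?_
          intro r s
          rw [hact_hact]
          exact hTsub ⟨s * h, some (hact k H r u₀), some (hact k H q v₀), by simp⟩
    | zero => rw [hact_zero]; exact zero_mem Tc
    | add x y hx hy ihx ihy => rw [hact_add]; exact add_mem ihx ihy
  -- Tc is closed under left multiplication
  have hTmulL : ∀ (z t : R), t ∈ Tc → z * t ∈ Tc := by
    intro z t ht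
    induction ht using AddSubmonoid.closure_induction with
    | mem τ hτ =>
      obtain ⟨h, u, v, rfl⟩ := hτ
      refine hTsub ⟨h, some (mulo z u), v, ?_⟩
      cases u <;> cases v <;> simp [mul_assoc]
    | zero => rw [mul_zero]; exact zero_mem Tc
    | add x y hx hy ihx ihy => rw [mul_add]; exact add_mem ihx ihy
  -- Tc is closed under right multiplication
  have hTmulR : ∀ (z t : R), t ∈ Tc → t * z ∈ Tc := by
    intro z t ht
    induction ht using AddSubmonoid.closure_induction with
    | mem τ hτ =>
      obtain ⟨h, u, v, rfl⟩ := hτ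
      refine hTsub ⟨h, u, some (omul v z), ?_⟩
      cases u <;> cases v <;> simp [mul_assoc]
    | zero => rw [zero_mul]; exact zero_mem Tc
    | add x y hx hy ihx ihy => rw [add_mul]; exact add_mem ihx ihy
  -- products through Tc land in P
  have prodP : ∀ x : R, x ∈ Tc → ∀ y : R, y ∈ Tc → ∀ b : R, x * b * y ∈ P := by
    intro x hx
    induction hx using AddSubmonoid.closure_induction with
    | mem τ hτ =>
      intro y hy
      induction hy using AddSubmonoid.closure_induction with
      | mem τ' hτ' =>
        intro b
        obtain ⟨h, u, v, rfl⟩ := hτ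
        obtain ⟨h', u', v', rfl⟩ := hτ'
        rw [prod_eq]
        have hmid := star h h' (mulo (omul v b) u')
        have h1 : mulo (hact k H h c * mulo (omul v b) u' * hact k H h' c) v' ∈ P := by
          cases v' with
          | none => exact hmid
          | some w => exact hmulR _ w hmid
        cases u with
        | none => exact h1
        | some z => exact hmulL z _ h1
      | zero => intro b; rw [mul_zero]; exact h0
      | add y z hy hz ihy ihz =>
        intro b; rw [mul_add]; exact haddP _ _ (ihy b) (ihz b)
    | zero => intro y hy b; rw [zero_mul, zero_mul]; exact h0
    | add x₁ x₂ hx1 hx2 ih1 ih2 =>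
      intro y hy b; rw [add_mul, add_mul]; exact haddP _ _ (ih1 y hy b) (ih2 y hy b)
  refine ⟨{x | ∃ p ∈ P, ∃ t ∈ Tc, x = p + t}, ?_, ?_, ?_, ?_, ?_, ?_, ?_, ?_⟩
  · intro p hp
    exact ⟨p, hp, 0, zero_mem Tc, (add_zero p).symm⟩
  · refine ⟨0, h0, c, hTsub ⟨1, none, none, ?_⟩, (zero_add c).symm⟩
    simp [hact_one]
  · exact ⟨0, h0, 0, zero_mem Tc, (add_zero 0).symm⟩
  · rintro x y ⟨p, hp, t, ht, rfl⟩ ⟨p', hp', t', ht', rfl⟩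
    exact ⟨p + p', haddP _ _ hp hp', t + t', add_mem ht ht',
      (add_add_add_comm p t p' t')⟩
  · rintro z y ⟨p, hp, t, ht, rfl⟩
    exact ⟨z * p, hmulL z p hp, z * t, hTmulL z t ht, mul_add z p t⟩
  · rintro y z ⟨p, hp, t, ht, rfl⟩
    exact ⟨p * z, hmulR p z hp, t * z, hTmulR z t ht, add_mul p t z⟩
  · rintro g y ⟨p, hp, t, ht, rfl⟩
    exact ⟨hact k H g p, hactP g p hp, hact k H g t, hTact g t ht, hact_add g p t⟩
  · rintro g g' b x y ⟨p, hp, t, ht, rfl⟩ ⟨p', hp', t', ht', rfl⟩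
    rw [hact_add, hact_add]
    set A := hact k H g p with hA
    set B := hact k H g t with hB
    set A' := hact k H g' p' with hA'
    set B' := hact k H g' t' with hB'
    have e : (A + B) * b * (A' + B') =
        (A * b * A' + A * b * B') + (B * b * A' + B * b * B') := by
      rw [add_mul, add_mul, mul_add, mul_add]
    rw [e]
    have hA_P : A ∈ P := hactP g p hp
    have hA'_P : A' ∈ P := hactP g' p' hp'
    refine haddP _ _ (haddP _ _ ?_ ?_) (haddP _ _ ?_ ?_)
    · exact hmulR _ A' (hmulR A b hA_P)
    · exact hmulR _ B' (hmulR A b hA_P)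
    · exact hmulL _ _ hA'_P
    · exact prodP _ (hTact g t ht) _ (hTact g' t' ht') b

end AuxStmt13

/-- if `L` spans `H` over `k`, then `W_H(R) = W_L(R)`. -/
theorem stmt13 {k H R : Type*} [CommRing k] [Ring H] [Algebra k H] [Coalgebra k H]
    [NonUnitalRing R] [Module k R] [SMulCommClass k R R] [IsScalarTower k R R]
    [HModAlg k H R] (L : Set H)
    (hL : Submodule.span k L = ⊤) :
    WLset k H (R := R) Set.univ = WLset k H (R := R) L := by
  ext a
  constructor
  · intro ha s b h h' hh hh' hs0 hrec
    exact ha s b h h' (fun n => Set.mem_univ _) (fun n => Set.mem_univ _) hs0 hrec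
  · intro ha s b h h' _ _ hs0 hrec
    by_contra hno
    push_neg at hno
    classical
    set S : Set (Set R) := {P : Set R |
      ((0 : R) ∈ P ∧ (∀ x y : R, x ∈ P → y ∈ P → x + y ∈ P) ∧
        (∀ x y : R, y ∈ P → x * y ∈ P) ∧ (∀ y x : R, y ∈ P → y * x ∈ P) ∧
        (∀ (g : H) (y : R), y ∈ P → hact k H g y ∈ P)) ∧ ∀ n, s n ∉ P} with hSdef
    have h0S : ({0} : Set R) ∈ S := by
      refine ⟨⟨rfl, ?_, ?_, ?_, ?_⟩, ?_⟩
      · intro x y hx hy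
        simp only [Set.mem_singleton_iff] at *
        rw [hx, hy, add_zero]
      · intro x y hy
        simp only [Set.mem_singleton_iff] at *
        rw [hy, mul_zero]
      · intro y x hy
        simp only [Set.mem_singleton_iff] at *
        rw [hy, zero_mul]
      · intro g y hy
        simp only [Set.mem_singleton_iff] at *
        rw [hy, hact_zero]
      · intro n hn
        exact hno n hn
    have hub : ∀ C ⊆ S, IsChain (· ⊆ ·) C → C.Nonempty →
        ∃ ub ∈ S, ∀ P ∈ C, P ⊆ ub := by
      intro C hCS hC hne
      refine ⟨⋃₀ C, ⟨⟨?_, ?_, ?_, ?_, ?_⟩, ?_⟩, fun P hP => Set.subset_sUnion_of_mem hP⟩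
      · obtain ⟨P₀, hP₀⟩ := hne
        exact ⟨P₀, hP₀, (hCS hP₀).1.1⟩
      · rintro x y ⟨P₁, hP₁, hx⟩ ⟨P₂, hP₂, hy⟩
        rcases hC.total hP₁ hP₂ with hsub | hsub
        · exact ⟨P₂, hP₂, (hCS hP₂).1.2.1 x y (hsub hx) hy⟩
        · exact ⟨P₁, hP₁, (hCS hP₁).1.2.1 x y hx (hsub hy)⟩
      · rintro x y ⟨P₁, hP₁, hy⟩
        exact ⟨P₁, hP₁, (hCS hP₁).1.2.2.1 x y hy⟩
      · rintro y x ⟨P₁, hP₁, hy⟩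
        exact ⟨P₁, hP₁, (hCS hP₁).1.2.2.2.1 y x hy⟩
      · rintro g y ⟨P₁, hP₁, hy⟩
        exact ⟨P₁, hP₁, (hCS hP₁).1.2.2.2.2 g y hy⟩
      · rintro n ⟨P₁, hP₁, hmem⟩
        exact (hCS hP₁).2 n hmem
    obtain ⟨P, -, hPmax⟩ := zorn_subset_nonempty S hub {0} h0S
    obtain ⟨⟨h0P, haddP, hmulLP, hmulRP, hactP⟩, hdisjP⟩ := hPmax.1
    have claim : ∀ c : R, c ∉ P → ∃ l ∈ L, ∃ l' ∈ L, ∃ bb : R,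
        hact k H l c * bb * hact k H l' c ∉ P := by
      intro c hc
      by_contra hcon
      push_neg at hcon
      have star : ∀ (g g' : H) (b : R), hact k H g c * b * hact k H g' c ∈ P :=
        star_lemma L hL P c h0P haddP hcon
      obtain ⟨J, hPJ, hcJ, hJ0, hJadd, hJmulL, hJmulR, hJact, hJP⟩ :=
        claim_core P c h0P haddP hmulLP hmulRP hactP star
      have hexJ : ∃ m, s m ∈ J := by
        by_contra hn
        push_neg at hn
        have hJS : J ∈ S := ⟨⟨hJ0, hJadd, hJmulL, hJmulR, hJact⟩, hn⟩
        exact hc (hPmax.2 hJS hPJ hcJ)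
      obtain ⟨m, hm⟩ := hexJ
      refine hdisjP (m + 1) ?_
      rw [hrec m]
      exact hJP (h m) (h' m) (b m) (s m) (s m) hm hm
    have haP : a ∉ P := by
      have := hdisjP 0
      rwa [hs0] at this
    obtain ⟨f, hf0, hfrec, hfQ⟩ := auxChain (fun x : R => x ∉ P)
      (fun x y => ∃ l ∈ L, ∃ l' ∈ L, ∃ bb : R, y = hact k H l x * bb * hact k H l' x)
      (fun x hx => by
        obtain ⟨l, hl, l', hl', bb, hbb⟩ := claim x hx
        exact ⟨hact k H l x * bb * hact k H l' x, ⟨l, hl, l', hl', bb, rfl⟩, hbb⟩)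
      a haP
    choose l hlL l' hl'L bb hbb using hfrec
    obtain ⟨n, hn⟩ := ha f bb l l' hlL hl'L hf0 hbb
    refine hfQ n ?_
    rw [hn]
    exact h0P
end

section
/- Let M be an R-H-BM-module. Then (0:M)_R is a maximal H-ideal of R, and R/(0:M)_R is an H-simple module algebra with unit. -/
open scoped TensorProduct

/-- The `H`-action on `R` as a bundled linear map. -/
def hactL (k H R : Type*) [CommRing k] [Ring H] [Algebra k H] [Coalgebra k H]
    [NonUnitalRing R] [Module k R] [SMulCommClass k R R] [IsScalarTower k R R]
    [HModAlg k H R] : H →ₗ[k] R →ₗ[k] R := HModAlg.hsmul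

/-- A (bundled) `R`-`H`-module: a left `R`-module which is a unital left `H`-module
satisfying `h(am) = Σ (h₁·a)(h₂ m)`. -/
structure RHMod (k H R : Type*) [CommRing k] [Ring H] [Algebra k H] [Coalgebra k H]
    [NonUnitalRing R] [Module k R] [SMulCommClass k R R] [IsScalarTower k R R]
    [HModAlg k H R] where
  M : Type*
  [addgrp : AddCommGroup M]
  [mod : Module k M]
  rsmul : R →ₗ[k] M →ₗ[k] M
  rsmul_mul : ∀ (a b : R) (m : M), rsmul (a * b) m = rsmul a (rsmul b m)
  hsmulM : H →ₗ[k] M →ₗ[k] M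
  one_hsmulM : ∀ m : M, hsmulM 1 m = m
  mul_hsmulM : ∀ (h h' : H) (m : M), hsmulM (h * h') m = hsmulM h (hsmulM h' m)
  compat : ∀ (h : H) (a : R) (m : M),
    hsmulM h (rsmul a m) =
      TensorProduct.lift rsmul
        (TensorProduct.map ((hactL k H R).flip a) (hsmulM.flip m) (Coalgebra.comul h))

attribute [instance] RHMod.addgrp RHMod.mod

namespace RHMod

variable {k H R : Type*} [CommRing k] [Ring H] [Algebra k H] [Coalgebra k H]
  [NonUnitalRing R] [Module k R] [SMulCommClass k R R] [IsScalarTower k R R]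
  [HModAlg k H R] (S : RHMod k H R)

/-- The annihilator `(0:M)_R` of the `R`-`H`-module. -/
def ann : Set R := {a : R | ∀ m : S.M, S.rsmul a m = 0}

/-- `M` is an `R`-`H`-prime module. -/
def IsPrime : Prop :=
  (∃ (a : R) (m : S.M), S.rsmul a m ≠ 0) ∧
    ∀ (x : S.M) (I : Set R), IsHIdeal k H I →
      (∀ a ∈ I, ∀ h : H, S.rsmul a (S.hsmulM h x) = 0) → x = 0 ∨ I ⊆ S.ann

/-- `M` is a faithful `R`-`H`-module. -/
def Faithful : Prop := S.ann = {0}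

end RHMod

/-- `M` is an `R`-`H`-`BM`-module. -/
def RHMod.IsBM {k H R : Type*} [CommRing k] [Ring H] [Algebra k H] [Coalgebra k H]
    [NonUnitalRing R] [Module k R] [SMulCommClass k R R] [IsScalarTower k R R]
    [HModAlg k H R] (S : RHMod k H R) : Prop :=
  (∃ (a : R) (m : S.M), S.rsmul a m ≠ 0) ∧
    ∀ I : Set R, IsHIdeal k H I → ¬ I ⊆ S.ann →
      ∃ u ∈ I, ∀ m : S.M, S.rsmul u m = m

/-- if `M` is an `R`-`H`-`BM`-module then `(0:M)_R` is a maximal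
`H`-ideal and `R/(0:M)_R` is an `H`-simple module algebra with unit. -/
theorem stmt17 {k H R : Type*} [Field k] [Ring H] [HopfAlgebra k H]
    [NonUnitalRing R] [Module k R] [SMulCommClass k R R] [IsScalarTower k R R]
    [HModAlg k H R] (S : RHMod k H R) (hS : S.IsBM) :
    S.ann ≠ Set.univ ∧
    (∀ J : Set R, IsHIdeal k H J → S.ann ⊆ J → J = S.ann ∨ J = Set.univ) ∧
    (∃ a b : R, a * b ∉ S.ann) ∧
    (∃ u : R, ∀ a : R, u * a - a ∈ S.ann ∧ a * u - a ∈ S.ann) := by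
  obtain ⟨⟨a₀, m₀, ha₀⟩, hBM⟩ := hS
  have huniv : IsHIdeal k H (Set.univ : Set R) := by
    constructor <;> intros <;> trivial
  have hne : S.ann ≠ Set.univ := by
    intro h
    exact ha₀ (by have := h ▸ (Set.mem_univ a₀); exact this m₀)
  have hnotsub : ¬ (Set.univ : Set R) ⊆ S.ann := fun h => hne (Set.eq_univ_of_univ_subset h)
  obtain ⟨u, -, hu⟩ := hBM Set.univ huniv hnotsub
  refine ⟨hne, ?_, ?_, ?_⟩
  · intro J hJ hsub
    by_cases hJs : J ⊆ S.ann
    · exact Or.inl (Set.Subset.antisymm hJs hsub)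
    · right
      obtain ⟨v, hvJ, hv⟩ := hBM J hJ hJs
      apply Set.eq_univ_of_forall
      intro a
      have h1 : a - v * a ∈ S.ann := by
        intro m
        rw [map_sub, LinearMap.sub_apply, S.rsmul_mul, hv, sub_self]
      have h2 : v * a ∈ J := hJ.mul_mem_right hvJ trivial
      have := hJ.add_mem (hsub h1) h2
      simpa using this
  · refine ⟨u, u, ?_⟩
    intro h
    have := h (S.rsmul a₀ m₀)
    rw [S.rsmul_mul, hu, hu] at this
    exact ha₀ this
  · refine ⟨u, fun a => ⟨?_, ?_⟩⟩
    · intro m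
      rw [map_sub, LinearMap.sub_apply, S.rsmul_mul, hu, sub_self]
    · intro m
      rw [map_sub, LinearMap.sub_apply, S.rsmul_mul, hu, sub_self]
end

section
/- Let H be a finite-dimensional semisimple Hopf algebra with left integral t satisfying ε(t) = 1, and let R be an H-simple module algebra. Then r_{gt}(R) = 0 if and only if R has a unit, where R is r_{gt}-radical iff a ∈ G_t(a) for all a ∈ R, with G_t(a) = { x + (t·a)x + Σ(x_i(t·a)y_i + x_i y_i) : x, x_i, y_i ∈ R }. -/
open scoped TensorProduct

/-- `z ∈ G_t(a)` computed within the subset `B` of `R`. -/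
def memGt (k H : Type*) {R : Type*} [CommRing k] [Ring H] [Algebra k H]
    [Coalgebra k H] [NonUnitalRing R] [Module k R] [SMulCommClass k R R]
    [IsScalarTower k R R] [HModAlg k H R] (t : H) (B : Set R) (a z : R) : Prop :=
  ∃ x ∈ B, ∃ l : List (R × R), (∀ p ∈ l, p.1 ∈ B ∧ p.2 ∈ B) ∧
    z = x + hact k H t a * x +
      (l.map fun p => p.1 * hact k H t a * p.2 + p.1 * p.2).sum

/-- `B` is an `r_{gt}`-`H`-ideal of `R`: an `H`-ideal on which `a ∈ G_t(a)`
(computed within `B`) for all `a ∈ B`. -/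
def IsGtIdeal (k H : Type*) {R : Type*} [CommRing k] [Ring H] [Algebra k H]
    [Coalgebra k H] [NonUnitalRing R] [Module k R] [SMulCommClass k R R]
    [IsScalarTower k R R] [HModAlg k H R] (t : H) (B : Set R) : Prop :=
  IsHIdeal k H B ∧ ∀ a ∈ B, memGt k H t B a a

/-- `B = r_{gt}(R)`: the largest `r_{gt}`-`H`-ideal of `R`. -/
def IsGtRadical (k H : Type*) {R : Type*} [CommRing k] [Ring H] [Algebra k H]
    [Coalgebra k H] [NonUnitalRing R] [Module k R] [SMulCommClass k R R]
    [IsScalarTower k R R] [HModAlg k H R] (t : H) (B : Set R) : Prop :=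
  IsGtIdeal k H t B ∧ ∀ I : Set R, IsGtIdeal k H t I → I ⊆ B

namespace StmtAux

/-- the action as a bundled bilinear map -/
def Aℓ (k H : Type*) {R : Type*} [CommRing k] [Ring H] [Algebra k H]
  [Coalgebra k H] [NonUnitalRing R] [Module k R]
  [SMulCommClass k R R] [IsScalarTower k R R] [HModAlg k H R] :
    H →ₗ[k] R →ₗ[k] R := HModAlg.hsmul

section Basic

variable {k H R : Type*} [CommRing k] [Ring H] [Algebra k H]
  [Coalgebra k H] [NonUnitalRing R] [Module k R]
  [SMulCommClass k R R] [IsScalarTower k R R] [HModAlg k H R]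

lemma hact_eq (h : H) (x : R) : hact k H h x = Aℓ k H h x := rfl

lemma Aℓ_one (r : R) : Aℓ k H (1 : H) r = r := HModAlg.one_hsmul r

lemma Aℓ_mul (h h' : H) (r : R) : Aℓ k H (h * h') r = Aℓ k H h (Aℓ k H h' r) :=
  HModAlg.mul_hsmul h h' r

@[simp] lemma hact_add (h : H) (x y : R) :
    hact k H h (x + y) = hact k H h x + hact k H h y :=
  map_add (Aℓ k H h) x y

@[simp] lemma hact_neg (h : H) (x : R) : hact k H h (-x) = -hact k H h x :=
  map_neg (Aℓ k H h) x

@[simp] lemma hact_zero (h : H) : hact k H h (0 : R) = 0 :=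
  map_zero (Aℓ k H h)

@[simp] lemma hact_sub (h : H) (x y : R) :
    hact k H h (x - y) = hact k H h x - hact k H h y :=
  map_sub (Aℓ k H h) x y

/-- list helpers -/
lemma sum_map_neg {α : Type*} (l : List α) (f : α → R) :
    (l.map fun a => -f a).sum = -(l.map f).sum := by
  induction l with
  | nil => simp
  | cons p l ih => simp [ih]; abel

lemma mul_sum_map {α : Type*} (r : R) (l : List α) (f : α → R) :
    r * (l.map f).sum = (l.map fun a => r * f a).sum := by
  induction l with
  | nil => simp
  | cons p l ih => simp [mul_add, ih]

lemma sum_map_mul {α : Type*} (r : R) (l : List α) (f : α → R) :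
    (l.map f).sum * r = (l.map fun a => f a * r).sum := by
  induction l with
  | nil => simp
  | cons p l ih => simp [add_mul, ih]

lemma sum_flatMap {α β : Type*} (l : List α) (g : α → List β) (f : β → R) :
    ((l.flatMap g).map f).sum = (l.map fun a => ((g a).map f).sum).sum := by
  induction l with
  | nil => simp
  | cons p l ih => simp [List.flatMap_cons, ih]

lemma sum_map_linear {α : Type*} {M N : Type*} [AddCommMonoid M] [AddCommMonoid N]
    [Module k M] [Module k N] (φ : M →ₗ[k] N) (l : List α) (g : α → M) :
    (l.map fun a => φ (g a)).sum = φ ((l.map g).sum) := by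
  rw [map_list_sum, List.map_map]; rfl

lemma exists_list_repr (c : H ⊗[k] H) :
    ∃ l : List (H × H), c = (l.map fun p => p.1 ⊗ₜ[k] p.2).sum := by
  induction c using TensorProduct.induction_on with
  | zero => exact ⟨[], by simp⟩
  | tmul x y => exact ⟨[(x, y)], by simp⟩
  | add x y hx hy =>
    obtain ⟨l1, h1⟩ := hx; obtain ⟨l2, h2⟩ := hy
    exact ⟨l1 ++ l2, by simp [h1, h2]⟩

lemma mul'_map_listsum (F G : H →ₗ[k] R) (l : List (H × H)) :
    LinearMap.mul' k R (TensorProduct.map F G (l.map fun p => p.1 ⊗ₜ[k] p.2).sum) =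
      (l.map fun p => F p.1 * G p.2).sum := by
  induction l with
  | nil => simp
  | cons p l ih => simp [ih, LinearMap.mul'_apply]

lemma hact_mul_list (h : H) (x y : R) (l : List (H × H))
    (hl : Coalgebra.comul (R := k) h = (l.map fun p => p.1 ⊗ₜ[k] p.2).sum) :
    hact k H h (x * y) = (l.map fun p => hact k H p.1 x * hact k H p.2 y).sum := by
  rw [hact_eq]
  show HModAlg.hsmul h (x * y) = _
  rw [HModAlg.hsmul_mul, hl, mul'_map_listsum]
  rfl

lemma collapse_left (h : H) (l : List (H × H))
    (hl : Coalgebra.comul (R := k) h = (l.map fun p => p.1 ⊗ₜ[k] p.2).sum) :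
    (l.map fun p => Coalgebra.counit (R := k) p.1 • p.2).sum = h := by
  have h2 : ∀ p ∈ l, Coalgebra.counit (R := k) p.1 • p.2
      = ((TensorProduct.lid k H).toLinearMap.comp
          ((Coalgebra.counit (R := k)).rTensor H)) (p.1 ⊗ₜ[k] p.2) := by
    intro p _; simp
  rw [List.map_congr_left h2, sum_map_linear, ← hl]
  simp

lemma collapse_right (h : H) (l : List (H × H))
    (hl : Coalgebra.comul (R := k) h = (l.map fun p => p.1 ⊗ₜ[k] p.2).sum) :
    (l.map fun p => Coalgebra.counit (R := k) p.2 • p.1).sum = h := by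
  have h2 : ∀ p ∈ l, Coalgebra.counit (R := k) p.2 • p.1
      = ((TensorProduct.rid k H).toLinearMap.comp
          ((Coalgebra.counit (R := k)).lTensor H)) (p.1 ⊗ₜ[k] p.2) := by
    intro p _; simp
  rw [List.map_congr_left h2, sum_map_linear, ← hl]
  simp

end Basic

lemma hact_invariant {k H R : Type*} [CommRing k] [Ring H] [Algebra k H]
    [Coalgebra k H] [NonUnitalRing R] [Module k R]
    [SMulCommClass k R R] [IsScalarTower k R R] [HModAlg k H R]
    {t : H} (ht : ∀ h : H, h * t = Coalgebra.counit (R := k) h • t) (a : R) (g : H) :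
    hact k H g (hact k H t a) = Coalgebra.counit (R := k) g • hact k H t a := by
  rw [hact_eq, hact_eq, ← Aℓ_mul, ht g, map_smul]
  rfl

section Inv

set_option linter.unusedSectionVars false

variable {k H R : Type*} [CommRing k] [Ring H] [Algebra k H]
  [Coalgebra k H] [NonUnitalRing R] [Module k R]
  [SMulCommClass k R R] [IsScalarTower k R R] [HModAlg k H R]

lemma hact_mul_inv_left {v : R} (hv : ∀ g : H, hact k H g v = Coalgebra.counit (R := k) g • v)
    (h : H) (x : R) : hact k H h (v * x) = v * hact k H h x := by
  obtain ⟨l, hl⟩ := exists_list_repr (Coalgebra.comul (R := k) h)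
  rw [hact_mul_list h v x l hl]
  have h2 : ∀ p ∈ l, hact k H p.1 v * hact k H p.2 x
      = ((LinearMap.mulLeft k v).comp ((Aℓ k H).flip x)) (Coalgebra.counit (R := k) p.1 • p.2) := by
    intro p _
    rw [hv p.1, smul_mul_assoc]
    simp only [LinearMap.comp_apply, map_smul, LinearMap.smul_apply, LinearMap.mulLeft_apply,
      LinearMap.flip_apply]
    rfl
  rw [List.map_congr_left h2, sum_map_linear, collapse_left h l hl]
  rfl

lemma hact_mul_inv_right {v : R} (hv : ∀ g : H, hact k H g v = Coalgebra.counit (R := k) g • v)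
    (h : H) (x : R) : hact k H h (x * v) = hact k H h x * v := by
  obtain ⟨l, hl⟩ := exists_list_repr (Coalgebra.comul (R := k) h)
  rw [hact_mul_list h x v l hl]
  have h2 : ∀ p ∈ l, hact k H p.1 x * hact k H p.2 v
      = ((LinearMap.mulRight k v).comp ((Aℓ k H).flip x)) (Coalgebra.counit (R := k) p.2 • p.1) := by
    intro p _
    rw [hv p.2, mul_smul_comm]
    simp only [LinearMap.comp_apply, map_smul, LinearMap.smul_apply, LinearMap.mulRight_apply,
      LinearMap.flip_apply]
    rfl
  rw [List.map_congr_left h2, sum_map_linear, collapse_right h l hl]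
  rfl

lemma hact_listsum {α : Type*} (h : H) (l : List α) (g : α → R) :
    hact k H h (l.map g).sum = (l.map fun a => hact k H h (g a)).sum :=
  (sum_map_linear (Aℓ k H h) l g).symm

end Inv

section Gt

set_option linter.unusedSectionVars false

variable {k H R : Type*} [CommRing k] [Ring H] [Algebra k H]
  [Coalgebra k H] [NonUnitalRing R] [Module k R]
  [SMulCommClass k R R] [IsScalarTower k R R] [HModAlg k H R]

lemma memGt_univ_iff {t : H} {a z : R} :
    memGt k H t Set.univ a z ↔ ∃ x : R, ∃ l : List (R × R),
      z = x + hact k H t a * x +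
        (l.map fun p => p.1 * hact k H t a * p.2 + p.1 * p.2).sum := by
  constructor
  · rintro ⟨x, -, l, -, hz⟩; exact ⟨x, l, hz⟩
  · rintro ⟨x, l, hz⟩; exact ⟨x, trivial, l, fun p _ => ⟨trivial, trivial⟩, hz⟩

lemma gtIdeal {t : H} (ht : ∀ h : H, h * t = Coalgebra.counit (R := k) h • t) (a : R) :
    IsHIdeal k H {z : R | memGt k H t Set.univ a z} := by
  set u := hact k H t a with hu
  have hvinv : ∀ g : H, hact k H g u = Coalgebra.counit (R := k) g • u :=
    hact_invariant ht a
  refine ⟨fun _ _ => trivial, ?_, ?_, ?_, ?_, ?_, ?_⟩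
  · exact memGt_univ_iff.mpr ⟨0, [], by simp⟩
  · intro z w hz hw
    obtain ⟨x1, l1, h1⟩ := memGt_univ_iff.mp hz
    obtain ⟨x2, l2, h2⟩ := memGt_univ_iff.mp hw
    refine memGt_univ_iff.mpr ⟨x1 + x2, l1 ++ l2, ?_⟩
    rw [h1, h2, List.map_append, List.sum_append, mul_add]
    abel
  · intro z hz
    obtain ⟨x, l, h1⟩ := memGt_univ_iff.mp hz
    refine memGt_univ_iff.mpr ⟨-x, l.map fun p => (-p.1, p.2), ?_⟩
    rw [h1, List.map_map]
    have h2 : ∀ p ∈ l,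
        ((fun p : R × R => p.1 * u * p.2 + p.1 * p.2) ∘ fun p : R × R => (-p.1, p.2)) p
        = -((fun p : R × R => p.1 * u * p.2 + p.1 * p.2) p) := by
      intro p _
      simp only [Function.comp_apply, neg_mul, neg_add_rev]
      abel
    rw [List.map_congr_left h2, sum_map_neg, mul_neg]
    abel
  · intro r _ z hz
    obtain ⟨x, l, h1⟩ := memGt_univ_iff.mp hz
    refine memGt_univ_iff.mpr ⟨0, (r, x) :: l.map fun p => (r * p.1, p.2), ?_⟩
    rw [h1, mul_add, mul_add, List.map_cons, List.sum_cons, List.map_map]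
    have h2 : ∀ p ∈ l,
        ((fun p : R × R => p.1 * u * p.2 + p.1 * p.2) ∘ fun p : R × R => (r * p.1, p.2)) p
        = r * ((fun p : R × R => p.1 * u * p.2 + p.1 * p.2) p) := by
      intro p _
      simp only [Function.comp_apply, mul_add, mul_assoc]
    rw [List.map_congr_left h2, ← mul_sum_map]
    rw [mul_zero, mul_assoc]
    abel
  · intro z hz r _
    obtain ⟨x, l, h1⟩ := memGt_univ_iff.mp hz
    refine memGt_univ_iff.mpr ⟨x * r, l.map fun p => (p.1, p.2 * r), ?_⟩
    rw [h1, add_mul, add_mul, List.map_map]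
    have h2 : ∀ p ∈ l,
        ((fun p : R × R => p.1 * u * p.2 + p.1 * p.2) ∘ fun p : R × R => (p.1, p.2 * r)) p
        = ((fun p : R × R => p.1 * u * p.2 + p.1 * p.2) p) * r := by
      intro p _
      simp only [Function.comp_apply, add_mul, mul_assoc]
    rw [List.map_congr_left h2, ← sum_map_mul, mul_assoc]
  · intro h z hz
    obtain ⟨x, l, h1⟩ := memGt_univ_iff.mp hz
    obtain ⟨lr, hlr⟩ := exists_list_repr (Coalgebra.comul (R := k) h)
    refine memGt_univ_iff.mpr ⟨hact k H h x,
      l.flatMap fun p => lr.map fun q => (hact k H q.1 p.1, hact k H q.2 p.2), ?_⟩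
    rw [h1, hact_add, hact_add, hact_mul_inv_left hvinv h x, hact_listsum]
    congr 1
    rw [sum_flatMap]
    congr 1
    apply List.map_congr_left
    intro p _
    have e1 : p.1 * u * p.2 + p.1 * p.2 = p.1 * (u * p.2 + p.2) := by
      rw [mul_add, mul_assoc]
    rw [e1, hact_mul_list h p.1 (u * p.2 + p.2) lr hlr, List.map_map]
    apply congrArg List.sum
    apply List.map_congr_left
    intro q _
    simp only [Function.comp_apply, hact_add, hact_mul_inv_left hvinv]
    rw [mul_add, mul_assoc]

end Gt


section Hopf

set_option linter.unusedSectionVars false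

variable {k H R : Type*} [CommRing k] [Ring H]
  [HopfAlgebra k H] [NonUnitalRing R] [Module k R]
  [SMulCommClass k R R] [IsScalarTower k R R] [HModAlg k H R]

lemma sum_mul_antipode_list (z : H) (l : List (H × H))
    (hl : Coalgebra.comul (R := k) z = (l.map fun p => p.1 ⊗ₜ[k] p.2).sum) :
    (l.map fun p => p.1 * HopfAlgebra.antipode (R := k) p.2).sum
      = Coalgebra.counit (R := k) z • (1 : H) := by
  have h2 : ∀ p ∈ l, p.1 * HopfAlgebra.antipode (R := k) p.2
      = ((LinearMap.mul' k H).comp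
          ((HopfAlgebra.antipode (R := k)).lTensor H)) (p.1 ⊗ₜ[k] p.2) := by
    intro p _; simp
  rw [List.map_congr_left h2, sum_map_linear, ← hl]
  simp only [LinearMap.comp_apply, HopfAlgebra.mul_antipode_lTensor_comul_apply,
    Algebra.linearMap_apply, Algebra.algebraMap_eq_smul_one]

lemma left_unit_hact {e : R} (he : ∀ x : R, e * x = x) (h : H) (r : R) :
    hact k H h e * r = Coalgebra.counit (R := k) h • r := by
  classical
  set S : H →ₗ[k] H := HopfAlgebra.antipode (R := k) with hS
  set ψ₂ : H ⊗[k] H →ₗ[k] R :=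
    TensorProduct.lift ((Aℓ k H).compl₂ (((Aℓ k H).flip r).comp S)) with hψ₂def
  have hψ₂tmul : ∀ (y z : H), ψ₂ (y ⊗ₜ[k] z) = Aℓ k H y (Aℓ k H (S z) r) := by
    intro y z; simp [hψ₂def]
  set ψ : H ⊗[k] (H ⊗[k] H) →ₗ[k] R :=
    TensorProduct.lift (((LinearMap.mul k R).comp ((Aℓ k H).flip e)).compl₂ ψ₂) with hψdef
  have hψtmul : ∀ (x : H) (c : H ⊗[k] H), ψ (x ⊗ₜ[k] c) = Aℓ k H x e * ψ₂ c := by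
    intro x c; simp [hψdef]
  -- ψ₂ on comul
  have hψ₂comul : ∀ z : H, ψ₂ (Coalgebra.comul (R := k) z)
      = Coalgebra.counit (R := k) z • r := by
    intro z
    obtain ⟨l, hl⟩ := exists_list_repr (Coalgebra.comul (R := k) z)
    rw [hl, map_list_sum, List.map_map]
    have h2 : ∀ p ∈ l, (⇑ψ₂ ∘ fun p : H × H => p.1 ⊗ₜ[k] p.2) p
        = ((Aℓ k H).flip r) (p.1 * S p.2) := by
      intro p _
      simp only [Function.comp_apply, hψ₂tmul, LinearMap.flip_apply]
      rw [Aℓ_mul]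
    rw [List.map_congr_left h2, sum_map_linear, sum_mul_antipode_list z l hl]
    rw [map_smul]
    simp only [LinearMap.smul_apply, LinearMap.flip_apply, Aℓ_one]
  -- LHS of coassoc
  have lhs : ψ ((TensorProduct.assoc k H H H)
      ((Coalgebra.comul (R := k)).rTensor H (Coalgebra.comul (R := k) h)))
      = Coalgebra.counit (R := k) h • r := by
    obtain ⟨l, hl⟩ := exists_list_repr (Coalgebra.comul (R := k) h)
    set Ξ : (H ⊗[k] H) ⊗[k] H →ₗ[k] R :=
      ψ ∘ₗ (TensorProduct.assoc k H H H).toLinearMap with hΞ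
    have hΞapp : ∀ c : (H ⊗[k] H) ⊗[k] H,
        Ξ c = ψ ((TensorProduct.assoc k H H H) c) := fun _ => rfl
    show Ξ (((Coalgebra.comul (R := k)).rTensor H) (Coalgebra.comul (R := k) h)) = _
    have e0 : ((Coalgebra.comul (R := k)).rTensor H)
        ((l.map fun p : H × H => p.1 ⊗ₜ[k] p.2).sum)
        = (l.map fun p : H × H => (Coalgebra.comul (R := k) p.1) ⊗ₜ[k] p.2).sum := by
      rw [map_list_sum, List.map_map]
      refine congrArg List.sum (List.map_congr_left ?_)
      intro p _
      simp
    rw [hl, e0, map_list_sum, List.map_map]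
    have key : ∀ p ∈ l,
        (⇑Ξ ∘ fun p : H × H => (Coalgebra.comul (R := k) p.1) ⊗ₜ[k] p.2) p
        = ((Aℓ k H).flip r) (p.1 * S p.2) := by
      intro p _
      simp only [Function.comp_apply]
      obtain ⟨lp, hlp⟩ := exists_list_repr (Coalgebra.comul (R := k) p.1)
      have e1 : (Coalgebra.comul (R := k) p.1) ⊗ₜ[k] p.2
          = (lp.map fun q : H × H => (q.1 ⊗ₜ[k] q.2) ⊗ₜ[k] p.2).sum := by
        rw [hlp]
        exact (sum_map_linear ((TensorProduct.mk k (H ⊗[k] H) H).flip p.2) lp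
          (fun q : H × H => q.1 ⊗ₜ[k] q.2)).symm
      rw [e1, map_list_sum, List.map_map]
      have e2 : ∀ q ∈ lp, (⇑Ξ ∘ fun q : H × H => (q.1 ⊗ₜ[k] q.2) ⊗ₜ[k] p.2) q
          = Aℓ k H q.1 e * Aℓ k H q.2 (Aℓ k H (S p.2) r) := by
        intro q _
        simp only [Function.comp_apply, hΞapp, TensorProduct.assoc_tmul, hψtmul, hψ₂tmul]
      rw [List.map_congr_left e2]
      have e3 : (lp.map fun q : H × H => Aℓ k H q.1 e * Aℓ k H q.2 (Aℓ k H (S p.2) r)).sum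
          = hact k H p.1 (e * (Aℓ k H (S p.2) r)) :=
        (hact_mul_list p.1 e (Aℓ k H (S p.2) r) lp hlp).symm
      rw [e3, hact_eq, he, ← Aℓ_mul]
      rfl
    rw [List.map_congr_left key, sum_map_linear, sum_mul_antipode_list h l hl, map_smul]
    simp only [LinearMap.smul_apply, LinearMap.flip_apply, Aℓ_one]
  -- RHS of coassoc
  have rhs : ψ ((Coalgebra.comul (R := k)).lTensor H (Coalgebra.comul (R := k) h))
      = hact k H h e * r := by
    obtain ⟨l, hl⟩ := exists_list_repr (Coalgebra.comul (R := k) h)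
    have e0 : ((Coalgebra.comul (R := k)).lTensor H)
        ((l.map fun p : H × H => p.1 ⊗ₜ[k] p.2).sum)
        = (l.map fun p : H × H => p.1 ⊗ₜ[k] (Coalgebra.comul (R := k) p.2)).sum := by
      rw [map_list_sum, List.map_map]
      refine congrArg List.sum (List.map_congr_left ?_)
      intro p _
      simp
    rw [hl, e0, map_list_sum, List.map_map]
    have key : ∀ p ∈ l,
        (⇑ψ ∘ fun p : H × H => p.1 ⊗ₜ[k] (Coalgebra.comul (R := k) p.2)) p
        = ((LinearMap.mulRight k r).comp ((Aℓ k H).flip e))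
            (Coalgebra.counit (R := k) p.2 • p.1) := by
      intro p _
      simp only [Function.comp_apply, hψtmul, hψ₂comul]
      rw [mul_smul_comm]
      simp only [map_smul, LinearMap.smul_apply, LinearMap.comp_apply,
        LinearMap.mulRight_apply, LinearMap.flip_apply]
    rw [List.map_congr_left key, sum_map_linear, collapse_right h l hl]
    rfl
  have coas := Coalgebra.coassoc_apply (R := k) (A := H) h
  rw [← coas] at rhs
  rw [← rhs]
  exact lhs

end Hopf


end StmtAux

open StmtAux in
/-- for a finite-dimensional semisimple Hopf algebra `H` with left
integral `t`, `ε(t) = 1`, and an `H`-simple module algebra `R`: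
`r_{gt}(R) = 0` iff `R` has a unit. -/
theorem stmt18 {k H R : Type*} [Field k] [Ring H] [HopfAlgebra k H]
    [FiniteDimensional k H] [IsSemisimpleRing H]
    [NonUnitalRing R] [Module k R] [SMulCommClass k R R] [IsScalarTower k R R]
    [HModAlg k H R]
    (t : H) (ht : ∀ h : H, h * t = Coalgebra.counit (R := k) h • t)
    (hε : Coalgebra.counit (R := k) t = (1 : k))
    (hR2 : ∃ a b : R, a * b ≠ 0)
    (hsimple : ∀ I : Set R, IsHIdeal k H I → I = {0} ∨ I = Set.univ)
    (B : Set R) (hB : IsGtRadical k H t B) :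
    B = {0} ↔ ∃ e : R, ∀ a : R, e * a = a ∧ a * e = a := by
  classical
  constructor
  · intro hB0
    obtain ⟨a0, b0, hab⟩ := hR2
    have ha0 : a0 ≠ 0 := fun hh => hab (by rw [hh, zero_mul])
    have hUid : IsHIdeal k H (Set.univ : Set R) := by
      constructor <;> intros <;> trivial
    have hex : ∃ a : R, ¬ memGt k H t Set.univ a a := by
      by_contra hc
      push_neg at hc
      have hsub : (Set.univ : Set R) ⊆ B := hB.2 _ ⟨hUid, fun a _ => hc a⟩
      have hmem := hsub (Set.mem_univ a0)
      rw [hB0, Set.mem_singleton_iff] at hmem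
      exact ha0 hmem
    obtain ⟨a, ha⟩ := hex
    have hGt := gtIdeal (k := k) (H := H) ht a
    rcases hsimple _ hGt with h0 | hu
    · set u := hact k H t a with hu_def
      have hinvu : ∀ g : H, hact k H g u = Coalgebra.counit (R := k) g • u :=
        hact_invariant ht a
      have hinve : ∀ g : H, hact k H g (-u) = Coalgebra.counit (R := k) g • (-u) := by
        intro g; rw [hact_neg, hinvu g, smul_neg]
      have hlu : ∀ x : R, (-u) * x = x := by
        intro x
        have hmem : (x + u * x + (([] : List (R × R)).map
            fun p => p.1 * u * p.2 + p.1 * p.2).sum) ∈ {z : R | memGt k H t Set.univ a z} :=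
          memGt_univ_iff.mpr ⟨x, [], rfl⟩
        rw [h0, Set.mem_singleton_iff] at hmem
        simp only [List.map_nil, List.sum_nil, add_zero] at hmem
        rw [neg_mul]
        exact neg_eq_of_add_eq_zero_left hmem
      have hJ : IsHIdeal k H (Set.range fun x : R => x - x * (-u)) := by
        refine ⟨fun _ _ => trivial, ⟨0, by simp⟩, ?_, ?_, ?_, ?_, ?_⟩
        · rintro _ _ ⟨x, rfl⟩ ⟨y, rfl⟩
          exact ⟨x + y, by simp only [add_mul]; abel⟩
        · rintro _ ⟨x, rfl⟩
          exact ⟨-x, by simp only [neg_mul]; abel⟩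
        · rintro r - _ ⟨x, rfl⟩
          exact ⟨r * x, by simp only [mul_sub, mul_assoc]⟩
        · rintro _ ⟨x, rfl⟩ r -
          refine ⟨0, ?_⟩
          simp only [zero_mul, sub_zero]
          rw [sub_mul, mul_assoc, hlu r, sub_self]
        · rintro h _ ⟨x, rfl⟩
          exact ⟨hact k H h x, by rw [hact_sub, hact_mul_inv_right hinve h x]⟩
      rcases hsimple _ hJ with hJ0 | hJu
      · refine ⟨-u, fun x => ⟨hlu x, ?_⟩⟩
        have hx : x - x * (-u) ∈ ({0} : Set R) := hJ0 ▸ ⟨x, rfl⟩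
        rw [Set.mem_singleton_iff, sub_eq_zero] at hx
        exact hx.symm
      · exfalso
        have hmem : a0 ∈ Set.range fun x : R => x - x * (-u) := hJu ▸ Set.mem_univ a0
        obtain ⟨x, hx⟩ := hmem
        apply hab
        rw [← hx, sub_mul, mul_assoc, hlu b0, sub_self]
    · exact absurd (show a ∈ {z : R | memGt k H t Set.univ a z} from by rw [hu]; trivial) ha
  · rintro ⟨e, hunit⟩
    rcases hsimple B hB.1.1 with h0 | hu
    · exact h0
    · exfalso
      obtain ⟨a0, b0, hab⟩ := hR2
      have hmem : memGt k H t B (-e) (-e) := hB.1.2 _ (by rw [hu]; trivial)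
      obtain ⟨x, -, l, -, hz⟩ := hmem
      have hte : ∀ y : R, hact k H t e * y = y := by
        intro y
        rw [left_unit_hact (fun z => (hunit z).1) t y, hε, one_smul]
      have h1 : x + hact k H t (-e) * x = 0 := by
        rw [hact_neg, neg_mul, hte x, add_neg_cancel]
      have h2 : (l.map fun p => p.1 * hact k H t (-e) * p.2 + p.1 * p.2).sum = 0 := by
        apply List.sum_eq_zero
        intro y hy
        rw [List.mem_map] at hy
        obtain ⟨p, -, rfl⟩ := hy
        rw [hact_neg, mul_neg, neg_mul, mul_assoc, hte p.2, neg_add_cancel]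
      have h3 : -e = 0 := by rw [hz, h2, add_zero, h1]
      rw [neg_eq_zero] at h3
      apply hab
      rw [show a0 = 0 from by rw [← (hunit a0).2, h3, mul_zero], zero_mul]
end
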